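/- Let a, b, c be positive real numbers with d := a*b − c > 0, and define P : ℝ → ℝ by P(R) = (1 − 2^{2R}·b)/(2^{2R}·c − a). Then at every R with 1/b < 2^{2R} < a/c, writing x = 2^{2R}, the second derivative of P equals P''(R) = −4·(ln 2)² · (a·d·x + c·d·x²)/(x·c − a)³, and this quantity is strictly positive. -/

import Mathlib

private lemma hx_deriv (y : ℝ) : HasDerivAt (fun t : ℝ => (2:ℝ) ^ (2 * t))
    (2 * Real.log 2 * (2:ℝ) ^ (2 * y)) y := by
  have h1 : HasDerivAt (fun t : ℝ => 2 * t) 2 y := by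
    simpa using (hasDerivAt_id y).const_mul 2
  have h2 := (Real.hasStrictDerivAt_const_rpow (by norm_num : (0:ℝ) < 2)
      (2 * y)).hasDerivAt
  have := h2.comp y h1
  refine this.congr_deriv ?_
  ring

private lemma d1 (a b c : ℝ) (y : ℝ) (hne : (2:ℝ) ^ (2 * y) * c - a ≠ 0) :
    HasDerivAt (fun t : ℝ => (1 - (2:ℝ) ^ (2 * t) * b) / ((2:ℝ) ^ (2 * t) * c - a))
      (2 * Real.log 2 * (a * b - c) * (2:ℝ) ^ (2 * y) / ((2:ℝ) ^ (2 * y) * c - a) ^ 2) y := by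
  have hX := hx_deriv y
  have hu : HasDerivAt (fun t : ℝ => 1 - (2:ℝ) ^ (2 * t) * b)
      (-(2 * Real.log 2 * (2:ℝ) ^ (2 * y) * b)) y := by
    simpa using (hX.mul_const b).const_sub 1
  have hv : HasDerivAt (fun t : ℝ => (2:ℝ) ^ (2 * t) * c - a)
      (2 * Real.log 2 * (2:ℝ) ^ (2 * y) * c) y := by
    simpa using (hX.mul_const c).sub_const a
  have := hu.div hv hne
  refine this.congr_deriv ?_
  field_simp
  ring

private lemma d2 (a b c : ℝ) (y : ℝ) (hne : (2:ℝ) ^ (2 * y) * c - a ≠ 0) :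
    HasDerivAt (fun t : ℝ =>
        2 * Real.log 2 * (a * b - c) * (2:ℝ) ^ (2 * t) / ((2:ℝ) ^ (2 * t) * c - a) ^ 2)
      (-4 * (Real.log 2) ^ 2 *
        ((a * (a * b - c) * (2:ℝ) ^ (2 * y) + c * (a * b - c) * ((2:ℝ) ^ (2 * y)) ^ 2) /
          ((2:ℝ) ^ (2 * y) * c - a) ^ 3)) y := by
  have hX := hx_deriv y
  have hu : HasDerivAt (fun t : ℝ => 2 * Real.log 2 * (a * b - c) * (2:ℝ) ^ (2 * t))
      (2 * Real.log 2 * (a * b - c) * (2 * Real.log 2 * (2:ℝ) ^ (2 * y))) y :=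
    hX.const_mul _
  have hv : HasDerivAt (fun t : ℝ => ((2:ℝ) ^ (2 * t) * c - a) ^ 2)
      (2 * ((2:ℝ) ^ (2 * y) * c - a) * (2 * Real.log 2 * (2:ℝ) ^ (2 * y) * c)) y := by
    have hv0 : HasDerivAt (fun t : ℝ => (2:ℝ) ^ (2 * t) * c - a)
        (2 * Real.log 2 * (2:ℝ) ^ (2 * y) * c) y := by
      simpa using (hX.mul_const c).sub_const a
    have := hv0.pow 2
    refine this.congr_deriv ?_
    ring
  have hne2 : ((2:ℝ) ^ (2 * y) * c - a) ^ 2 ≠ 0 := pow_ne_zero _ hne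
  have := hu.div hv hne2
  refine this.congr_deriv ?_
  field_simp
  ring

/-- Appendix B computation: on the feasible interval the second derivative of the
CPF power-rate function equals `-4 (ln 2)² (a d x + c d x²)/(x c - a)³` with
`x = 2^{2R}` and `d = a*b - c`, and it is strictly positive. -/
theorem stmt_6 (a b c d : ℝ) (ha : 0 < a) (hb : 0 < b) (hc : 0 < c)
    (hd : d = a * b - c) (hd' : 0 < d) (R : ℝ)
    (h1 : 1 / b < (2:ℝ) ^ (2 * R)) (h2 : (2:ℝ) ^ (2 * R) < a / c) :
    deriv (deriv (fun R : ℝ => (1 - (2:ℝ) ^ (2 * R) * b) / ((2:ℝ) ^ (2 * R) * c - a))) R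
      = -4 * (Real.log 2) ^ 2 *
        ((a * d * (2:ℝ) ^ (2 * R) + c * d * ((2:ℝ) ^ (2 * R)) ^ 2) /
          ((2:ℝ) ^ (2 * R) * c - a) ^ 3) ∧
    0 < -4 * (Real.log 2) ^ 2 *
        ((a * d * (2:ℝ) ^ (2 * R) + c * d * ((2:ℝ) ^ (2 * R)) ^ 2) /
          ((2:ℝ) ^ (2 * R) * c - a) ^ 3) := by
  have hxpos : (0:ℝ) < (2:ℝ) ^ (2 * R) := Real.rpow_pos_of_pos (by norm_num) _
  have hvneg : (2:ℝ) ^ (2 * R) * c - a < 0 := by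
    have := (lt_div_iff₀ hc).mp h2
    linarith
  have hne : (2:ℝ) ^ (2 * R) * c - a ≠ 0 := ne_of_lt hvneg
  have hcont : ContinuousAt (fun t : ℝ => (2:ℝ) ^ (2 * t) * c - a) R := by
    have hv0 : HasDerivAt (fun t : ℝ => (2:ℝ) ^ (2 * t) * c - a)
        (2 * Real.log 2 * (2:ℝ) ^ (2 * R) * c) R := by
      simpa using ((hx_deriv R).mul_const c).sub_const a
    exact hv0.continuousAt
  have hev : ∀ᶠ y in nhds R, (2:ℝ) ^ (2 * y) * c - a ≠ 0 :=
    hcont.eventually_ne hne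
  have heq : (deriv (fun R : ℝ =>
        (1 - (2:ℝ) ^ (2 * R) * b) / ((2:ℝ) ^ (2 * R) * c - a)))
      =ᶠ[nhds R] (fun y =>
        2 * Real.log 2 * (a * b - c) * (2:ℝ) ^ (2 * y) / ((2:ℝ) ^ (2 * y) * c - a) ^ 2) := by
    filter_upwards [hev] with y hy
    exact (d1 a b c y hy).deriv
  constructor
  · rw [Filter.EventuallyEq.deriv_eq heq, (d2 a b c R hne).deriv, hd]
  · have hnum : 0 < a * d * (2:ℝ) ^ (2 * R) + c * d * ((2:ℝ) ^ (2 * R)) ^ 2 := by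
      have h1' : 0 < a * d * (2:ℝ) ^ (2 * R) := by positivity
      have h2' : 0 < c * d * ((2:ℝ) ^ (2 * R)) ^ 2 := by positivity
      linarith
    have hv3 : ((2:ℝ) ^ (2 * R) * c - a) ^ 3 < 0 :=
      Odd.pow_neg (by decide) hvneg
    have hfrac : (a * d * (2:ℝ) ^ (2 * R) + c * d * ((2:ℝ) ^ (2 * R)) ^ 2) /
        ((2:ℝ) ^ (2 * R) * c - a) ^ 3 < 0 := div_neg_of_pos_of_neg hnum hv3
    have hL : (0:ℝ) < Real.log 2 := Real.log_pos (by norm_num)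
    have : (-4 : ℝ) * (Real.log 2) ^ 2 < 0 := by nlinarith
    exact mul_pos_of_neg_of_neg this hfrac
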